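/- Let b_n ≥ 0 be non-negative integers satisfying b_{n+1} ≤ b_n for all n ≥ 1, and let T^p = inf{n ≥ 1 : |S_n^p| ≥ b_n}. Then, in terms of the likelihood ratio order, T^p is increasing in p ∈ [0,1/2] and decreasing in p ∈ [1/2,1]; in particular, for 0 ≤ p < p' ≤ 1/2 and any integers n ≤ n', P(T^{p'} = n) P(T^{p} = n') ≤ P(T^{p'} = n') P(T^{p} = n). -/

import Mathlib

open MeasureTheory ProbabilityTheory Finset

/-- The distribution of a single increment of the Bernoulli random walk:
`+1` with probability `p` and `-1` with probability `1 - p`. -/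
noncomputable def stepDist (p : ℝ) : Measure ℝ :=
  ENNReal.ofReal p • Measure.dirac 1 + ENNReal.ofReal (1 - p) • Measure.dirac (-1)

/-- The event `{T = n}` where `T = inf{k ≥ 1 : |S_k| ≥ b_k}` for the walk with increments
`X` and boundaries `b`: the walk first reaches the boundary at time `n`. -/
def firstHitEvent {Ω : Type*} (X : ℕ → Ω → ℝ) (b : ℕ → ℕ) (n : ℕ) : Set Ω :=
  {ω | (b n : ℝ) ≤ |∑ i ∈ Finset.range n, X i ω| ∧
    ∀ k, 1 ≤ k → k < n → |∑ i ∈ Finset.range k, X i ω| < (b k : ℝ)}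

namespace BRW


def psum {m : ℕ} (ε : Fin m → Bool) (k : ℕ) : ℤ :=
  ∑ i ∈ Finset.range k, if h : i < m then (if ε ⟨i, h⟩ then (1 : ℤ) else -1) else 0

def hitProp (b : ℕ → ℕ) (m : ℕ) (ε : Fin m → Bool) : Prop :=
  (b m : ℤ) ≤ |psum ε m| ∧ ∀ k, 1 ≤ k → k < m → |psum ε k| < (b k : ℤ)

noncomputable def hitSet (b : ℕ → ℕ) (m : ℕ) : Finset (Fin m → Bool) :=
  @Finset.filter _ (hitProp b m) (Classical.decPred _) Finset.univ

lemma mem_hitSet {b : ℕ → ℕ} {m : ℕ} {ε : Fin m → Bool} :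
    ε ∈ hitSet b m ↔ hitProp b m ε := by
  unfold hitSet
  classical
  exact ⟨fun h => (Finset.mem_filter.mp h).2,
    fun h => Finset.mem_filter.mpr ⟨Finset.mem_univ _, h⟩⟩

noncomputable def W (b : ℕ → ℕ) (p : ℝ) (m : ℕ) : ℝ :=
  ∑ ε ∈ hitSet b m, ∏ i : Fin m, (if ε i then p else 1 - p)

lemma W_nonneg (b : ℕ → ℕ) {p : ℝ} (hp0 : 0 ≤ p) (hp1 : p ≤ 1) (m : ℕ) :
    0 ≤ W b p m := by
  apply Finset.sum_nonneg
  intro ε _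
  apply Finset.prod_nonneg
  intro i _
  split_ifs
  · exact hp0
  · linarith

lemma psum_flip {m : ℕ} (ε : Fin m → Bool) (k : ℕ) :
    psum (fun i => !(ε i)) k = -psum ε k := by
  unfold psum
  rw [← Finset.sum_neg_distrib]
  refine Finset.sum_congr rfl fun i hi => ?_
  by_cases h : i < m
  · rw [dif_pos h, dif_pos h]
    cases hε : ε ⟨i, h⟩ <;> simp [hε]
  · simp [h]

lemma flip_mem_hitSet {b : ℕ → ℕ} {m : ℕ} {ε : Fin m → Bool} (h : ε ∈ hitSet b m) :
    (fun i => !(ε i)) ∈ hitSet b m := by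
  rw [mem_hitSet] at h ⊢
  obtain ⟨h1, h2⟩ := h
  constructor
  · rw [psum_flip, abs_neg]; exact h1
  · intro k hk hkm; rw [psum_flip, abs_neg]; exact h2 k hk hkm

lemma sum_comp_flip {b : ℕ → ℕ} {m : ℕ} (F : (Fin m → Bool) → ℝ) :
    ∑ ε ∈ hitSet b m, F ε = ∑ ε ∈ hitSet b m, F (fun i => !(ε i)) := by
  refine Finset.sum_bij' (fun ε _ => fun i => !(ε i)) (fun ε _ => fun i => !(ε i))
    (fun ε hε => flip_mem_hitSet hε) (fun ε hε => flip_mem_hitSet hε)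
    (fun ε hε => by funext i; simp) (fun ε hε => by funext i; simp)
    (fun ε hε => by simp)

lemma psum_succ {m : ℕ} (ε : Fin m → Bool) (k : ℕ) :
    psum ε (k + 1) = psum ε k + (if h : k < m then (if ε ⟨k, h⟩ then (1 : ℤ) else -1) else 0) :=
  Finset.sum_range_succ _ _

lemma step_abs_le {m : ℕ} (ε : Fin m → Bool) (k : ℕ) :
    |(if h : k < m then (if ε ⟨k, h⟩ then (1 : ℤ) else -1) else 0)| ≤ 1 := by
  split_ifs <;> simp

lemma psum_abs_le {m : ℕ} (ε : Fin m → Bool) (k : ℕ) : |psum ε k| ≤ (k : ℤ) := by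
  induction k with
  | zero => simp [psum]
  | succ k ih =>
    rw [psum_succ]
    calc |psum ε k + _| ≤ |psum ε k| + |_| := abs_add_le _ _
      _ ≤ (k : ℤ) + 1 := add_le_add ih (step_abs_le ε k)
      _ = ((k + 1 : ℕ) : ℤ) := by push_cast; ring

lemma psum_false {m : ℕ} (k : ℕ) (hk : k ≤ m) :
    psum (fun _ => false : Fin m → Bool) k = -(k : ℤ) := by
  unfold psum
  have : ∀ i ∈ Finset.range k, (if h : i < m then
      (if (fun _ => false : Fin m → Bool) ⟨i, h⟩ then (1 : ℤ) else -1) else 0) = -1 := by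
    intro i hi
    have him : i < m := lt_of_lt_of_le (Finset.mem_range.mp hi) hk
    simp [him]
  rw [Finset.sum_congr rfl this, Finset.sum_const, Finset.card_range]
  simp

lemma b_mono {b : ℕ → ℕ} (hb : ∀ n, 1 ≤ n → b (n + 1) ≤ b n) :
    ∀ k l, 1 ≤ k → k ≤ l → b l ≤ b k := by
  intro k l hk hkl
  induction l, hkl using Nat.le_induction with
  | base => exact le_refl _
  | succ l hl ih => exact le_trans (hb l (le_trans hk hl)) ih

lemma psum_top {m : ℕ} (ε : Fin m → Bool) :
    psum ε m = 2 * ((Finset.univ.filter fun i => ε i = true).card : ℤ) - m := by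
  classical
  have h1 : psum ε m = ∑ i : Fin m, (if ε i then (1 : ℤ) else -1) := by
    rw [psum, ← Fin.sum_univ_eq_sum_range
      (fun i => if h : i < m then (if ε ⟨i, h⟩ then (1 : ℤ) else -1) else 0)]
    exact Finset.sum_congr rfl fun i _ => by simp [i.isLt]
  rw [h1, Finset.sum_ite, Finset.sum_const, Finset.sum_const]
  have h2 : (Finset.univ.filter fun i : Fin m => ε i = true).card
      + (Finset.univ.filter fun i : Fin m => ¬ (ε i = true)).card = m := by
    rw [Finset.card_filter_add_card_filter_not]
    simp
  simp only [nsmul_eq_mul, smul_eq_mul, mul_one, mul_neg_one] at *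
  push_cast
  omega

/-- On the hit event at time `n' > n`, the walk's final position is bounded by `b n`. -/
lemma abs_psum_le_bn {b : ℕ → ℕ} (hb : ∀ n, 1 ≤ n → b (n + 1) ≤ b n)
    {n n' : ℕ} (hn : 1 ≤ n) (hnn' : n < n') {ε : Fin n' → Bool} (hε : ε ∈ hitSet b n') :
    |psum ε n'| ≤ (b n : ℤ) := by
  rw [mem_hitSet] at hε
  have hn'1 : 1 ≤ n' - 1 := by omega
  have hlt : n' - 1 < n' := by omega
  have h2 := hε.2 (n' - 1) hn'1 hlt
  have hstep : |psum ε n'| ≤ |psum ε (n' - 1)| + 1 := by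
    have hs := psum_succ ε (n' - 1)
    have e : n' - 1 + 1 = n' := by omega
    rw [e] at hs
    rw [hs]
    exact (abs_add_le _ _).trans (add_le_add le_rfl (step_abs_le ε _))
  have hmono : b (n' - 1) ≤ b n := b_mono hb n (n' - 1) hn (by omega)
  have : |psum ε (n' - 1)| + 1 ≤ (b (n' - 1) : ℤ) := by omega
  calc |psum ε n'| ≤ |psum ε (n' - 1)| + 1 := hstep
    _ ≤ (b (n' - 1) : ℤ) := this
    _ ≤ (b n : ℤ) := by exact_mod_cast hmono

noncomputable def D (b : ℕ → ℕ) (m : ℕ) (x : ℝ) : ℝ :=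
  ∑ ε ∈ hitSet b m, Real.exp (x * ((psum ε m : ℤ) : ℝ))

noncomputable def Dd (b : ℕ → ℕ) (m : ℕ) (x : ℝ) : ℝ :=
  ∑ ε ∈ hitSet b m, Real.exp (x * ((psum ε m : ℤ) : ℝ)) * ((psum ε m : ℤ) : ℝ)

lemma hasDerivAt_D (b : ℕ → ℕ) (m : ℕ) (x : ℝ) :
    HasDerivAt (D b m) (Dd b m x) x := by
  apply HasDerivAt.fun_sum
  intro ε _
  simpa using ((hasDerivAt_id x).mul_const ((psum ε m : ℤ) : ℝ)).exp

lemma D_pos {b : ℕ → ℕ} {m : ℕ} (hm : (hitSet b m).Nonempty) (x : ℝ) :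
    0 < D b m x :=
  Finset.sum_pos (fun ε _ => Real.exp_pos _) hm

lemma D_eq_cosh (b : ℕ → ℕ) (m : ℕ) (x : ℝ) :
    D b m x = ∑ ε ∈ hitSet b m, Real.cosh (x * ((psum ε m : ℤ) : ℝ)) := by
  have h2 : D b m x = ∑ ε ∈ hitSet b m, Real.exp (-(x * ((psum ε m : ℤ) : ℝ))) := by
    rw [D, sum_comp_flip (fun ε => Real.exp (x * ((psum ε m : ℤ) : ℝ)))]
    refine Finset.sum_congr rfl fun ε _ => ?_
    rw [psum_flip]
    push_cast
    ring_nf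
  have h3 : (∑ ε ∈ hitSet b m, Real.cosh (x * ((psum ε m : ℤ) : ℝ)))
      = (∑ ε ∈ hitSet b m, (Real.exp (x * ((psum ε m : ℤ) : ℝ))
        + Real.exp (-(x * ((psum ε m : ℤ) : ℝ)))) / 2) :=
    Finset.sum_congr rfl fun ε _ => by rw [Real.cosh_eq]
  rw [h3, ← Finset.sum_div, Finset.sum_add_distrib, ← D, ← h2]
  ring

lemma Dd_eq_sinh (b : ℕ → ℕ) (m : ℕ) (x : ℝ) :
    Dd b m x = ∑ ε ∈ hitSet b m, ((psum ε m : ℤ) : ℝ) * Real.sinh (x * ((psum ε m : ℤ) : ℝ)) := by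
  have h2 : Dd b m x = ∑ ε ∈ hitSet b m,
      Real.exp (-(x * ((psum ε m : ℤ) : ℝ))) * (-((psum ε m : ℤ) : ℝ)) := by
    rw [Dd, sum_comp_flip (fun ε => Real.exp (x * ((psum ε m : ℤ) : ℝ)) * ((psum ε m : ℤ) : ℝ))]
    refine Finset.sum_congr rfl fun ε _ => ?_
    rw [psum_flip]
    push_cast
    ring_nf
  have h3 : (∑ ε ∈ hitSet b m, ((psum ε m : ℤ) : ℝ) * Real.sinh (x * ((psum ε m : ℤ) : ℝ)))
      = (∑ ε ∈ hitSet b m, (Real.exp (x * ((psum ε m : ℤ) : ℝ)) * ((psum ε m : ℤ) : ℝ)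
        + Real.exp (-(x * ((psum ε m : ℤ) : ℝ))) * (-((psum ε m : ℤ) : ℝ))) / 2) :=
    Finset.sum_congr rfl fun ε _ => by rw [Real.sinh_eq]; ring
  rw [h3, ← Finset.sum_div, Finset.sum_add_distrib, ← Dd, ← h2]
  ring

section hyp

lemma base_U {z c x : ℝ} (hx : 0 ≤ x) (hz0 : 0 ≤ z) (hzc : z ≤ c) :
    z * Real.sinh (x * z) * Real.cosh (x * c) ≤ c * Real.sinh (x * c) * Real.cosh (x * z) := by
  have h1 : Real.sinh (x * z) * Real.cosh (x * c) ≤ Real.sinh (x * c) * Real.cosh (x * z) := by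
    have h2 : Real.sinh (x * z - x * c) ≤ 0 :=
      Real.sinh_nonpos_iff.mpr (by nlinarith)
    rw [Real.sinh_sub] at h2
    nlinarith
  have hsc : 0 ≤ Real.sinh (x * c) :=
    Real.sinh_nonneg_iff.mpr (mul_nonneg hx (hz0.trans hzc))
  calc z * Real.sinh (x * z) * Real.cosh (x * c)
      = z * (Real.sinh (x * z) * Real.cosh (x * c)) := by ring
    _ ≤ z * (Real.sinh (x * c) * Real.cosh (x * z)) := mul_le_mul_of_nonneg_left h1 hz0
    _ ≤ c * (Real.sinh (x * c) * Real.cosh (x * z)) :=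
        mul_le_mul_of_nonneg_right hzc (mul_nonneg hsc (Real.cosh_pos _).le)
    _ = c * Real.sinh (x * c) * Real.cosh (x * z) := by ring

lemma even_form (x z : ℝ) : z * Real.sinh (x * z) = |z| * Real.sinh (x * |z|) ∧
    Real.cosh (x * z) = Real.cosh (x * |z|) := by
  rcases abs_cases z with ⟨h, _⟩ | ⟨h, _⟩
  · rw [h]; exact ⟨rfl, rfl⟩
  · rw [h, show x * -z = -(x * z) by ring, Real.sinh_neg, Real.cosh_neg]
    constructor <;> ring

lemma lem_U {z c x : ℝ} (hx : 0 ≤ x) (hz : |z| ≤ c) :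
    z * Real.sinh (x * z) * Real.cosh (x * c) ≤ c * Real.sinh (x * c) * Real.cosh (x * z) := by
  obtain ⟨h1, h2⟩ := even_form x z
  rw [h1, h2]
  exact base_U hx (abs_nonneg z) hz

lemma lem_L {z c x : ℝ} (hx : 0 ≤ x) (hc : 0 ≤ c) (hz : c ≤ |z|) :
    c * Real.sinh (x * c) * Real.cosh (x * z) ≤ z * Real.sinh (x * z) * Real.cosh (x * c) := by
  obtain ⟨h1, h2⟩ := even_form x z
  rw [h1, h2]
  set w := |z| with hw
  have hw0 : 0 ≤ w := abs_nonneg z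
  have h3 : Real.sinh (x * c) * Real.cosh (x * w) ≤ Real.sinh (x * w) * Real.cosh (x * c) := by
    have h2' : Real.sinh (x * c - x * w) ≤ 0 :=
      Real.sinh_nonpos_iff.mpr (by nlinarith)
    rw [Real.sinh_sub] at h2'
    nlinarith
  have hsw : 0 ≤ Real.sinh (x * w) := Real.sinh_nonneg_iff.mpr (mul_nonneg hx hw0)
  calc c * Real.sinh (x * c) * Real.cosh (x * w)
      = c * (Real.sinh (x * c) * Real.cosh (x * w)) := by ring
    _ ≤ c * (Real.sinh (x * w) * Real.cosh (x * c)) := mul_le_mul_of_nonneg_left h3 hc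
    _ ≤ w * (Real.sinh (x * w) * Real.cosh (x * c)) :=
        mul_le_mul_of_nonneg_right hz (mul_nonneg hsw (Real.cosh_pos _).le)
    _ = w * Real.sinh (x * w) * Real.cosh (x * c) := by ring

end hyp

/-- The key log-supermodularity inequality (★). -/
theorem star {b : ℕ → ℕ} (hb : ∀ n, 1 ≤ n → b (n + 1) ≤ b n)
    {n n' : ℕ} (hn : 1 ≤ n) (hnn' : n < n')
    (hBn : (hitSet b n).Nonempty) (hBn' : (hitSet b n').Nonempty)
    {x y : ℝ} (hy : 0 ≤ y) (hyx : y ≤ x) :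
    Real.cosh y ^ (n' - n) * D b n y * D b n' x
      ≤ Real.cosh x ^ (n' - n) * D b n' y * D b n x := by
  set Δ : ℕ := n' - n with hΔ
  set c : ℝ := (b n : ℝ) with hc
  have hc0 : 0 ≤ c := Nat.cast_nonneg _
  set φ : ℝ → ℝ := fun t =>
    Real.log (D b n' t) - Real.log (D b n t) - (Δ : ℝ) * Real.log (Real.cosh t) with hφdef
  have hDn : ∀ t, 0 < D b n t := fun t => D_pos hBn t
  have hDn' : ∀ t, 0 < D b n' t := fun t => D_pos hBn' t
  have hφ : ∀ t, HasDerivAt φ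
      (Dd b n' t / D b n' t - Dd b n t / D b n t
        - (Δ : ℝ) * (Real.sinh t / Real.cosh t)) t := by
    intro t
    have h1 := (hasDerivAt_D b n' t).log (hDn' t).ne'
    have h2 := (hasDerivAt_D b n t).log (hDn t).ne'
    have h3 := ((Real.hasDerivAt_cosh t).log (Real.cosh_pos t).ne').const_mul (Δ : ℝ)
    exact (h1.sub h2).sub h3
  -- the derivative is nonpositive on [0, ∞)
  have hψ : ∀ t, 0 ≤ t → Dd b n' t / D b n' t - Dd b n t / D b n t
      - (Δ : ℝ) * (Real.sinh t / Real.cosh t) ≤ 0 := by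
    intro t ht
    have claim1 : Dd b n' t * Real.cosh (t * c) ≤ c * Real.sinh (t * c) * D b n' t := by
      rw [Dd_eq_sinh, D_eq_cosh, Finset.sum_mul, Finset.mul_sum]
      refine Finset.sum_le_sum fun ε hε => ?_
      have hbd : |((psum ε n' : ℤ) : ℝ)| ≤ c := by
        rw [← Int.cast_abs, hc]
        exact_mod_cast abs_psum_le_bn hb hn hnn' hε
      calc ((psum ε n' : ℤ) : ℝ) * Real.sinh (t * ((psum ε n' : ℤ) : ℝ)) * Real.cosh (t * c)
          ≤ c * Real.sinh (t * c) * Real.cosh (t * ((psum ε n' : ℤ) : ℝ)) := lem_U ht hbd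
        _ = c * Real.sinh (t * c) * Real.cosh (t * ((psum ε n' : ℤ) : ℝ)) := rfl
    have claim2 : c * Real.sinh (t * c) * D b n t ≤ Dd b n t * Real.cosh (t * c) := by
      rw [Dd_eq_sinh, D_eq_cosh, Finset.sum_mul, Finset.mul_sum]
      refine Finset.sum_le_sum fun ε hε => ?_
      have hbd : c ≤ |((psum ε n : ℤ) : ℝ)| := by
        rw [← Int.cast_abs, hc]
        exact_mod_cast (mem_hitSet.mp hε).1
      exact lem_L ht hc0 hbd
    have h1 : Dd b n' t / D b n' t ≤ c * Real.sinh (t * c) / Real.cosh (t * c) :=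
      (div_le_div_iff₀ (hDn' t) (Real.cosh_pos _)).mpr claim1
    have h2 : c * Real.sinh (t * c) / Real.cosh (t * c) ≤ Dd b n t / D b n t :=
      (div_le_div_iff₀ (Real.cosh_pos _) (hDn t)).mpr claim2
    have h3 : 0 ≤ (Δ : ℝ) * (Real.sinh t / Real.cosh t) := by
      apply mul_nonneg (Nat.cast_nonneg _)
      exact div_nonneg (Real.sinh_nonneg_iff.mpr ht) (Real.cosh_pos _).le
    linarith
  have hanti : AntitoneOn φ (Set.Ici (0 : ℝ)) := by
    apply antitoneOn_of_deriv_nonpos (convex_Ici 0)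
    · exact fun t _ => (hφ t).differentiableAt.continuousAt.continuousWithinAt
    · exact fun t _ => (hφ t).differentiableAt.differentiableWithinAt
    · intro t ht
      rw [interior_Ici] at ht
      rw [(hφ t).deriv]
      exact hψ t (le_of_lt ht)
  have key : φ x ≤ φ y :=
    hanti (Set.mem_Ici.mpr hy) (Set.mem_Ici.mpr (hy.trans hyx)) hyx
  rw [hφdef] at key
  simp only [] at key
  have hA := hDn' x; have hB := hDn x; have hA' := hDn' y; have hB' := hDn y
  have hC := Real.cosh_pos x; have hC' := Real.cosh_pos y
  have k2 : Real.log (D b n' x * D b n y * Real.cosh y ^ Δ)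
      ≤ Real.log (D b n' y * D b n x * Real.cosh x ^ Δ) := by
    rw [Real.log_mul (by positivity) (by positivity), Real.log_mul hA.ne' hB'.ne',
      Real.log_mul (by positivity) (by positivity), Real.log_mul hA'.ne' hB.ne',
      Real.log_pow, Real.log_pow]
    linarith
  have k3 : D b n' x * D b n y * Real.cosh y ^ Δ
      ≤ D b n' y * D b n x * Real.cosh x ^ Δ := by
    have := Real.exp_le_exp.mpr k2
    rwa [Real.exp_log (by positivity), Real.exp_log (by positivity)] at this
  calc Real.cosh y ^ Δ * D b n y * D b n' x
      = D b n' x * D b n y * Real.cosh y ^ Δ := by ring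
    _ ≤ D b n' y * D b n x * Real.cosh x ^ Δ := k3
    _ = Real.cosh x ^ Δ * D b n' y * D b n x := by ring


noncomputable def theta (p : ℝ) : ℝ := Real.log (Real.sqrt ((1 - p) / p))

lemma exp_theta {p : ℝ} (hp : 0 < p) (hp1 : p < 1) :
    Real.exp (theta p) = Real.sqrt ((1 - p) / p) :=
  Real.exp_log (Real.sqrt_pos.mpr (div_pos (by linarith) hp))

lemma s_mul_sigma {p : ℝ} (hp : 0 < p) (hp1 : p < 1) :
    Real.sqrt (p * (1 - p)) * Real.sqrt ((1 - p) / p) = 1 - p := by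
  rw [← Real.sqrt_mul (by nlinarith)]
  rw [show p * (1 - p) * ((1 - p) / p) = (1 - p) ^ 2 by field_simp]
  exact Real.sqrt_sq (by linarith)

lemma p_mul_sigma {p : ℝ} (hp : 0 < p) (hp1 : p < 1) :
    p * Real.sqrt ((1 - p) / p) = Real.sqrt (p * (1 - p)) := by
  have hσ2 : Real.sqrt ((1 - p) / p) ^ 2 = (1 - p) / p :=
    Real.sq_sqrt (div_pos (by linarith) hp).le
  have h2 : (p * Real.sqrt ((1 - p) / p)) ^ 2 = p * (1 - p) := by
    rw [mul_pow, hσ2]; field_simp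
  have h3 : p * Real.sqrt ((1 - p) / p) = Real.sqrt ((p * Real.sqrt ((1 - p) / p)) ^ 2) :=
    (Real.sqrt_sq (by positivity)).symm
  rw [h3, h2]

lemma s_cosh {p : ℝ} (hp : 0 < p) (hp1 : p < 1) :
    Real.sqrt (p * (1 - p)) * Real.cosh (theta p) = 1 / 2 := by
  have hσpos : 0 < Real.sqrt ((1 - p) / p) := Real.sqrt_pos.mpr (div_pos (by linarith) hp)
  rw [Real.cosh_eq, exp_theta hp hp1, Real.exp_neg, exp_theta hp hp1]
  have hinv : Real.sqrt (p * (1 - p)) * (Real.sqrt ((1 - p) / p))⁻¹ = p := by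
    rw [← p_mul_sigma hp hp1, mul_assoc, mul_inv_cancel₀ (ne_of_gt (Real.sqrt_pos.mpr
      (div_pos (by linarith) hp))), mul_one]
  rw [show Real.sqrt (p * (1 - p)) * ((Real.sqrt ((1 - p) / p) + (Real.sqrt ((1 - p) / p))⁻¹) / 2)
    = (Real.sqrt (p * (1 - p)) * Real.sqrt ((1 - p) / p)
      + Real.sqrt (p * (1 - p)) * (Real.sqrt ((1 - p) / p))⁻¹) / 2 by ring,
    s_mul_sigma hp hp1, hinv]
  ring

lemma theta_nonneg {p : ℝ} (hp : 0 < p) (hp2 : p ≤ 1 / 2) : 0 ≤ theta p := by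
  apply Real.log_nonneg
  have h1 : (1 : ℝ) ≤ (1 - p) / p := by rw [le_div_iff₀ hp]; linarith
  calc (1 : ℝ) = Real.sqrt 1 := Real.sqrt_one.symm
    _ ≤ Real.sqrt ((1 - p) / p) := Real.sqrt_le_sqrt h1

lemma theta_mono {p p' : ℝ} (hp : 0 < p) (hpp' : p < p') (hp1 : p' < 1) :
    theta p' ≤ theta p := by
  have hp'0 : 0 < p' := lt_trans hp hpp'
  apply Real.log_le_log (Real.sqrt_pos.mpr (div_pos (by linarith) hp'0))
  apply Real.sqrt_le_sqrt
  rw [div_le_div_iff₀ hp'0 hp]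
  nlinarith

lemma prod_flip_eq {p : ℝ} (hp : 0 < p) (hp1 : p < 1) {m : ℕ} (ε : Fin m → Bool) :
    (∏ i : Fin m, (if !(ε i) then p else 1 - p))
      = Real.sqrt (p * (1 - p)) ^ m * Real.exp (theta p * ((psum ε m : ℤ) : ℝ)) := by
  classical
  have hstep1 : (∏ i : Fin m, (if !(ε i) then p else 1 - p))
      = ∏ i : Fin m, (if ε i then 1 - p else p) := by
    refine Finset.prod_congr rfl fun i _ => ?_
    cases h : ε i <;> simp [h]
  set u := (Finset.univ.filter fun i : Fin m => ε i = true).card with hu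
  set v := (Finset.univ.filter fun i : Fin m => ¬ (ε i = true)).card with hv
  have huv : u + v = m := by
    rw [hu, hv, Finset.card_filter_add_card_filter_not]
    simp
  have hstep2 : (∏ i : Fin m, (if ε i then 1 - p else p)) = (1 - p) ^ u * p ^ v := by
    rw [Finset.prod_ite (fun _ => (1 - p)) (fun _ => p), Finset.prod_const, Finset.prod_const]
  rw [hstep1, hstep2, psum_top]
  set σ : ℝ := Real.sqrt ((1 - p) / p) with hσ
  have hσpos : 0 < σ := Real.sqrt_pos.mpr (div_pos (by linarith) hp)
  have hσ2 : σ ^ 2 = (1 - p) / p := Real.sq_sqrt (div_pos (by linarith) hp).le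
  have h1p : 1 - p = p * σ ^ 2 := by rw [hσ2]; field_simp
  have harg : theta p * (((2 * (u : ℤ) - (m : ℤ)) : ℤ) : ℝ)
      = ((u : ℝ) * theta p + (u : ℝ) * theta p) - (m : ℝ) * theta p := by
    push_cast; ring
  rw [harg, Real.exp_sub, Real.exp_add, Real.exp_nat_mul,
    exp_theta hp hp1, ← hσ]
  have hs : Real.sqrt (p * (1 - p)) = p * σ := (p_mul_sigma hp hp1).symm
  rw [hs, ← huv]
  have hσm : σ ^ (u + v) ≠ 0 := pow_ne_zero _ hσpos.ne'
  field_simp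
  rw [h1p,
    Real.exp_nat_mul, exp_theta hp hp1, ← hσ]
  ring

lemma W_eq {b : ℕ → ℕ} {p : ℝ} (hp : 0 < p) (hp1 : p < 1) (m : ℕ) :
    W b p m = Real.sqrt (p * (1 - p)) ^ m * D b m (theta p) := by
  rw [W, sum_comp_flip (fun ε => ∏ i : Fin m, (if ε i then p else 1 - p)), D, Finset.mul_sum]
  exact Finset.sum_congr rfl fun ε _ => prod_flip_eq hp hp1 ε

theorem core_real (b : ℕ → ℕ) (hb : ∀ n, 1 ≤ n → b (n + 1) ≤ b n)
    {p p' : ℝ} (hp0 : 0 ≤ p) (hpp' : p < p') (hp'half : p' ≤ 1 / 2)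
    {n n' : ℕ} (hn : 1 ≤ n) (hnn' : n ≤ n') :
    W b p' n * W b p n' ≤ W b p' n' * W b p n := by
  rcases eq_or_lt_of_le hnn' with rfl | hlt
  · rw [mul_comm]
  have hp'0 : 0 < p' := lt_of_le_of_lt hp0 hpp'
  have hp'1 : p' < 1 := by linarith
  by_cases hBn : (hitSet b n).Nonempty
  swap
  · rw [Finset.not_nonempty_iff_eq_empty] at hBn
    have h1 : W b p' n = 0 := by rw [W, hBn, Finset.sum_empty]
    have h2 : W b p n = 0 := by rw [W, hBn, Finset.sum_empty]
    rw [h1, h2, zero_mul, mul_zero]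
  by_cases hBn' : (hitSet b n').Nonempty
  swap
  · rw [Finset.not_nonempty_iff_eq_empty] at hBn'
    have h1 : W b p n' = 0 := by rw [W, hBn', Finset.sum_empty]
    have h2 : W b p' n' = 0 := by rw [W, hBn', Finset.sum_empty]
    rw [h1, h2, mul_zero, zero_mul]
  rcases eq_or_lt_of_le hp0 with rfl | hp
  · -- p = 0 : the only path with positive weight is all-downs, which cannot hit at n' > n
    have hW0 : W b 0 n' = 0 := by
      apply Finset.sum_eq_zero
      intro ε hε
      have hne : ε ≠ (fun _ => false) := by
        intro hfalse
        subst hfalse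
        have hprop := mem_hitSet.mp hε
        have hsurv := hprop.2 n hn hlt
        rw [psum_false n (le_of_lt hlt)] at hsurv
        obtain ⟨w, hw⟩ := hBn
        have hhit := (mem_hitSet.mp hw).1
        have habs := psum_abs_le w n
        rw [abs_neg] at hsurv
        simp only [Int.abs_natCast] at hsurv
        omega
      obtain ⟨i, hi⟩ := Function.ne_iff.mp hne
      have hitrue : ε i = true := by
        cases h : ε i
        · exact absurd h hi
        · rfl
      apply Finset.prod_eq_zero (Finset.mem_univ i)
      rw [hitrue]
      norm_num
    rw [hW0, mul_zero]
    apply mul_nonneg (W_nonneg b (by linarith) (by linarith) n') (W_nonneg b le_rfl (by norm_num) n)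
  -- main case : 0 < p < p' ≤ 1/2
  have hp1 : p < 1 := by linarith
  have hy : 0 ≤ theta p' := theta_nonneg hp'0 hp'half
  have hyx : theta p' ≤ theta p := theta_mono hp hpp' hp'1
  rw [W_eq hp hp1, W_eq hp hp1, W_eq hp'0 hp'1, W_eq hp'0 hp'1]
  set s : ℝ := Real.sqrt (p * (1 - p)) with hsdef
  set s' : ℝ := Real.sqrt (p' * (1 - p')) with hs'def
  have hspos : 0 < s := Real.sqrt_pos.mpr (by nlinarith)
  have hs'pos : 0 < s' := Real.sqrt_pos.mpr (by nlinarith)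
  have hsc : s * Real.cosh (theta p) = 1 / 2 := s_cosh hp hp1
  have hs'c : s' * Real.cosh (theta p') = 1 / 2 := s_cosh hp'0 hp'1
  set Δ : ℕ := n' - n with hΔdef
  have hstar := star hb hn hlt hBn hBn' hy hyx
  have hmul := mul_le_mul_of_nonneg_left hstar
    (show (0 : ℝ) ≤ s ^ Δ * s' ^ Δ by positivity)
  have lhs_eq : s ^ Δ * s' ^ Δ * (Real.cosh (theta p') ^ (n' - n) * D b n (theta p')
        * D b n' (theta p))
      = (1 / 2 : ℝ) ^ Δ * (s ^ Δ * D b n (theta p') * D b n' (theta p)) := by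
    rw [← hΔdef, show (1 / 2 : ℝ) ^ Δ = (s' * Real.cosh (theta p')) ^ Δ by rw [hs'c], mul_pow]
    ring
  have rhs_eq : s ^ Δ * s' ^ Δ * (Real.cosh (theta p) ^ (n' - n) * D b n' (theta p')
        * D b n (theta p))
      = (1 / 2 : ℝ) ^ Δ * (s' ^ Δ * D b n' (theta p') * D b n (theta p)) := by
    rw [← hΔdef, show (1 / 2 : ℝ) ^ Δ = (s * Real.cosh (theta p)) ^ Δ by rw [hsc], mul_pow]
    ring
  rw [lhs_eq, rhs_eq] at hmul
  have hfin : s ^ Δ * D b n (theta p') * D b n' (theta p)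
      ≤ s' ^ Δ * D b n' (theta p') * D b n (theta p) :=
    le_of_mul_le_mul_left hmul (by positivity)
  have hsn : s ^ n' = s ^ n * s ^ Δ := by
    rw [← pow_add]
    congr 1
    omega
  have hs'n : s' ^ n' = s' ^ n * s' ^ Δ := by
    rw [← pow_add]
    congr 1
    omega
  calc s' ^ n * D b n (theta p') * (s ^ n' * D b n' (theta p))
      = (s' ^ n * s ^ n) * (s ^ Δ * D b n (theta p') * D b n' (theta p)) := by
        rw [hsn]; ring
    _ ≤ (s' ^ n * s ^ n) * (s' ^ Δ * D b n' (theta p') * D b n (theta p)) := by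
        apply mul_le_mul_of_nonneg_left hfin (by positivity)
    _ = s' ^ n' * D b n' (theta p') * (s ^ n * D b n (theta p)) := by
        rw [hs'n]; ring

def val (x : Bool) : ℝ := if x then 1 else -1

def cset {m : ℕ} (ε : Fin m → Bool) (i : ℕ) : Set ℝ :=
  if h : i < m then {val (ε ⟨i, h⟩)} else Set.univ

def Cyl {Ω : Type*} (X : ℕ → Ω → ℝ) {m : ℕ} (ε : Fin m → Bool) : Set Ω :=
  ⋂ i ∈ Finset.range m, X i ⁻¹' cset ε i

lemma cset_measurable {m : ℕ} (ε : Fin m → Bool) (i : ℕ) : MeasurableSet (cset ε i) := by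
  unfold cset
  split_ifs
  · exact measurableSet_singleton _
  · exact MeasurableSet.univ

lemma mem_Cyl_iff {Ω : Type*} {X : ℕ → Ω → ℝ} {m : ℕ} {ε : Fin m → Bool} {ω : Ω} :
    ω ∈ Cyl X ε ↔ ∀ i (hi : i < m), X i ω = val (ε ⟨i, hi⟩) := by
  unfold Cyl
  simp only [Set.mem_iInter, Set.mem_preimage, Finset.mem_range]
  constructor
  · intro h i hi
    have := h i hi
    rw [cset, dif_pos hi, Set.mem_singleton_iff] at this
    exact this
  · intro h i hi
    rw [cset, dif_pos hi, Set.mem_singleton_iff]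
    exact h i hi

lemma sums_eq {Ω : Type*} {X : ℕ → Ω → ℝ} {m : ℕ} {ε : Fin m → Bool} {ω : Ω}
    (h : ∀ i (hi : i < m), X i ω = val (ε ⟨i, hi⟩)) {k : ℕ} (hk : k ≤ m) :
    ∑ i ∈ Finset.range k, X i ω = ((psum ε k : ℤ) : ℝ) := by
  rw [psum]
  push_cast
  refine Finset.sum_congr rfl fun i hi => ?_
  have him : i < m := lt_of_lt_of_le (Finset.mem_range.mp hi) hk
  rw [dif_pos him, h i him, val]
  split_ifs <;> norm_num

section Meas

variable {Ω : Type*} [MeasurableSpace Ω] (μ : Measure Ω) [IsProbabilityMeasure μ]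
variable {p : ℝ} {X : ℕ → Ω → ℝ}

lemma marg_one (hXmeas : ∀ i, Measurable (X i)) (hXdist : ∀ i, Measure.map (X i) μ = stepDist p)
    (i : ℕ) : μ (X i ⁻¹' {(1 : ℝ)}) = ENNReal.ofReal p := by
  rw [← Measure.map_apply (hXmeas i) (measurableSet_singleton _), hXdist i]
  have d1 : (Measure.dirac (1 : ℝ)) {(1 : ℝ)} = 1 := by simp
  have d2 : (Measure.dirac (-1 : ℝ)) {(1 : ℝ)} = 0 := by
    rw [Measure.dirac_apply' _ (measurableSet_singleton _)]
    simp only [Set.indicator]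
    norm_num
  simp [stepDist, Measure.add_apply, Measure.smul_apply, d1, d2]

lemma marg_neg_one (hXmeas : ∀ i, Measurable (X i))
    (hXdist : ∀ i, Measure.map (X i) μ = stepDist p) (i : ℕ) :
    μ (X i ⁻¹' {(-1 : ℝ)}) = ENNReal.ofReal (1 - p) := by
  rw [← Measure.map_apply (hXmeas i) (measurableSet_singleton _), hXdist i]
  have d1 : (Measure.dirac (1 : ℝ)) {(-1 : ℝ)} = 0 := by
    rw [Measure.dirac_apply' _ (measurableSet_singleton _)]
    simp only [Set.indicator]
    norm_num
  have d2 : (Measure.dirac (-1 : ℝ)) {(-1 : ℝ)} = 1 := by simp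
  simp [stepDist, Measure.add_apply, Measure.smul_apply, d1, d2]

lemma sgn_measurable : MeasurableSet ({1, -1} : Set ℝ) :=
  (measurableSet_singleton _).insert 1

lemma marg_null (hXmeas : ∀ i, Measurable (X i))
    (hXdist : ∀ i, Measure.map (X i) μ = stepDist p) (i : ℕ) :
    μ (X i ⁻¹' ({1, -1} : Set ℝ)ᶜ) = 0 := by
  rw [← Measure.map_apply (hXmeas i) sgn_measurable.compl, hXdist i]
  have d1 : (Measure.dirac (1 : ℝ)) ({1, -1} : Set ℝ)ᶜ = 0 := by
    rw [Measure.dirac_apply' _ sgn_measurable.compl]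
    simp
  have d2 : (Measure.dirac (-1 : ℝ)) ({1, -1} : Set ℝ)ᶜ = 0 := by
    rw [Measure.dirac_apply' _ sgn_measurable.compl]
    simp
  simp [stepDist, Measure.add_apply, Measure.smul_apply, d1, d2]

theorem measure_firstHit (hp0 : 0 ≤ p) (hp1 : p ≤ 1)
    (hXmeas : ∀ i, Measurable (X i))
    (hXindep : iIndepFun X μ)
    (hXdist : ∀ i, Measure.map (X i) μ = stepDist p)
    (b : ℕ → ℕ) (m : ℕ) :
    μ (firstHitEvent X b m) = ENNReal.ofReal (W b p m) := by
  classical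
  set N : Set Ω := ⋃ i ∈ Finset.range m, X i ⁻¹' ({1, -1} : Set ℝ)ᶜ with hNdef
  have hN0 : μ N = 0 := by
    rw [hNdef]
    refine (measure_biUnion_null_iff (Finset.range m).countable_toSet).mpr fun i _ => ?_
    exact marg_null μ hXmeas hXdist i
  have hdecomp : firstHitEvent X b m \ N = ⋃ ε ∈ hitSet b m, Cyl X ε := by
    ext ω
    constructor
    · rintro ⟨hE, hNot⟩
      have hsign : ∀ i, i < m → X i ω ∈ ({1, -1} : Set ℝ) := by
        intro i hi
        by_contra hc
        exact hNot (Set.mem_biUnion (Finset.mem_range.mpr hi) hc)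
      set ε : Fin m → Bool := fun i => if X i.val ω = 1 then true else false with hεdef
      have hval : ∀ i (hi : i < m), X i ω = val (ε ⟨i, hi⟩) := by
        intro i hi
        rcases hsign i hi with h | h
        · norm_num [val, hεdef, h]
        · simp only [Set.mem_singleton_iff] at h
          norm_num [val, hεdef, h]
      refine Set.mem_biUnion (mem_hitSet.mpr ?_) (mem_Cyl_iff.mpr hval)
      obtain ⟨hE1, hE2⟩ := hE
      constructor
      · rw [sums_eq hval le_rfl, ← Int.cast_abs] at hE1
        exact_mod_cast hE1
      · intro k hk hkm
        have := hE2 k hk hkm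
        rw [sums_eq hval (le_of_lt hkm), ← Int.cast_abs] at this
        exact_mod_cast this
    · intro hω
      obtain ⟨ε, hεmem, hCyl⟩ := Set.mem_iUnion₂.mp hω
      have hval := mem_Cyl_iff.mp hCyl
      rw [mem_hitSet] at hεmem
      obtain ⟨h1, h2⟩ := hεmem
      constructor
      · constructor
        · rw [sums_eq hval le_rfl, ← Int.cast_abs]
          exact_mod_cast h1
        · intro k hk hkm
          rw [sums_eq hval (le_of_lt hkm), ← Int.cast_abs]
          exact_mod_cast h2 k hk hkm
      · intro hmem
        rw [hNdef] at hmem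
        obtain ⟨i, hi, hc⟩ := Set.mem_iUnion₂.mp hmem
        rw [Finset.mem_range] at hi
        apply hc
        rw [hval i hi, val]
        split_ifs
        · exact Set.mem_insert _ _
        · exact Set.mem_insert_of_mem _ rfl
  have hCylM : ∀ ε : Fin m → Bool, MeasurableSet (Cyl X ε) := fun ε =>
    MeasurableSet.biInter (Finset.range m).countable_toSet
      (fun i _ => (hXmeas i) (cset_measurable ε i))
  have hdisj : Set.PairwiseDisjoint ↑(hitSet b m) (fun ε : Fin m → Bool => Cyl X ε) := by
    intro ε hε ε' hε' hne
    rw [Function.onFun]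
    rw [Set.disjoint_left]
    intro ω hω hω'
    obtain ⟨i, hi⟩ := Function.ne_iff.mp hne
    have e1 := mem_Cyl_iff.mp hω i.val i.isLt
    have e2 := mem_Cyl_iff.mp hω' i.val i.isLt
    apply hi
    have : val (ε ⟨i.val, i.isLt⟩) = val (ε' ⟨i.val, i.isLt⟩) := by rw [← e1, ← e2]
    simp only [Fin.eta] at this
    unfold val at this
    cases h : ε i <;> cases h' : ε' i <;> rw [h, h'] at this <;> norm_num at this <;> rw [h, h']
  have hCylMeasure : ∀ ε : Fin m → Bool,
      μ (Cyl X ε) = ∏ i : Fin m,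
        (if ε i then ENNReal.ofReal p else ENNReal.ofReal (1 - p)) := by
    intro ε
    rw [Cyl, hXindep.measure_inter_preimage_eq_mul (Finset.range m)
      (fun i _ => cset_measurable ε i)]
    rw [← Fin.prod_univ_eq_prod_range (fun i => μ (X i ⁻¹' cset ε i)) m]
    refine Finset.prod_congr rfl fun i _ => ?_
    have hc : cset ε i.val = {val (ε i)} := by
      rw [cset, dif_pos i.isLt]
    rw [hc]
    cases h : ε i
    · rw [if_neg (by simp), show val false = (-1 : ℝ) from rfl]
      exact marg_neg_one μ hXmeas hXdist i.val
    · rw [if_pos rfl, show val true = (1 : ℝ) from rfl]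
      exact marg_one μ hXmeas hXdist i.val
  calc μ (firstHitEvent X b m) = μ (firstHitEvent X b m \ N) := (measure_diff_null hN0).symm
    _ = μ (⋃ ε ∈ hitSet b m, Cyl X ε) := by rw [hdecomp]
    _ = ∑ ε ∈ hitSet b m, μ (Cyl X ε) := measure_biUnion_finset hdisj (fun ε _ => hCylM ε)
    _ = ∑ ε ∈ hitSet b m, ∏ i : Fin m,
        (if ε i then ENNReal.ofReal p else ENNReal.ofReal (1 - p)) :=
      Finset.sum_congr rfl (fun ε _ => hCylMeasure ε)
    _ = ENNReal.ofReal (W b p m) := by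
        have hnn : ∀ ε, ε ∈ hitSet b m → 0 ≤ ∏ i : Fin m, (if ε i then p else 1 - p) :=
          fun ε _ => Finset.prod_nonneg fun i _ => by split_ifs; exacts [hp0, by linarith]
        rw [W, ENNReal.ofReal_sum_of_nonneg hnn]
        refine Finset.sum_congr rfl fun ε _ => ?_
        rw [ENNReal.ofReal_prod_of_nonneg (fun i _ => by split_ifs; exacts [hp0, by linarith])]
        exact Finset.prod_congr rfl fun i _ => by split_ifs <;> rfl

end Meas

end BRW


/-- **Theorem 6.** Let `b_n ≥ 0` be non-increasing integer boundaries and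
`T^p = inf{n ≥ 1 : |S^p_n| ≥ b_n}` for the Bernoulli random walk `S^p`.  Then, in the
likelihood ratio order, `T^p` is increasing in `p ∈ [0,1/2]` (and, by symmetry, decreasing in
`p ∈ [1/2,1]`): for `0 ≤ p < p' ≤ 1/2` and integers `1 ≤ n ≤ n'`,
`P(T^{p'} = n) ⬝ P(T^{p} = n') ≤ P(T^{p'} = n') ⬝ P(T^{p} = n)`. -/
theorem bernoulli_walk_stopping_time_likelihood_ratio_monotone
    {Ω Ω' : Type*} [MeasurableSpace Ω] [MeasurableSpace Ω']
    (μ : Measure Ω) (μ' : Measure Ω')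
    [IsProbabilityMeasure μ] [IsProbabilityMeasure μ']
    (p p' : ℝ) (hp0 : 0 ≤ p) (hpp' : p < p') (hp'half : p' ≤ 1/2)
    (X : ℕ → Ω → ℝ) (X' : ℕ → Ω' → ℝ)
    (hXmeas : ∀ i, Measurable (X i)) (hX'meas : ∀ i, Measurable (X' i))
    (hXindep : iIndepFun X μ)
    (hX'indep : iIndepFun X' μ')
    (hXdist : ∀ i, Measure.map (X i) μ = stepDist p)
    (hX'dist : ∀ i, Measure.map (X' i) μ' = stepDist p')
    (b : ℕ → ℕ) (hb : ∀ n, 1 ≤ n → b (n + 1) ≤ b n)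
    (n n' : ℕ) (hn : 1 ≤ n) (hnn' : n ≤ n') :
    μ' (firstHitEvent X' b n) * μ (firstHitEvent X b n')
      ≤ μ' (firstHitEvent X' b n') * μ (firstHitEvent X b n) := by
  have hp'0 : 0 ≤ p' := le_trans hp0 (le_of_lt hpp')
  have hp1 : p ≤ 1 := by linarith
  have hp'1 : p' ≤ 1 := by linarith
  rw [BRW.measure_firstHit μ' hp'0 hp'1 hX'meas hX'indep hX'dist b n,
    BRW.measure_firstHit μ hp0 hp1 hXmeas hXindep hXdist b n',
    BRW.measure_firstHit μ' hp'0 hp'1 hX'meas hX'indep hX'dist b n',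
    BRW.measure_firstHit μ hp0 hp1 hXmeas hXindep hXdist b n,
    ← ENNReal.ofReal_mul (BRW.W_nonneg b hp'0 hp'1 n),
    ← ENNReal.ofReal_mul (BRW.W_nonneg b hp'0 hp'1 n')]
  exact ENNReal.ofReal_le_ofReal (BRW.core_real b hb hp0 hpp' hp'half hn hnn')
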